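/- arXiv:0707.4385 — 3 statements merged into one kernel-verified Lean document; each statement's English description precedes it below -/
import Mathlib

section
/- For any octonions a, b, c, the real part Re((āb)(ca)) equals |a|² · Re(bc), where |a|² = a·ā. -/
noncomputable section

def Oct : Type := Quaternion ℝ × Quaternion ℝ

namespace Oct

def fst (p : Oct) : Quaternion ℝ := Prod.fst p
def snd (p : Oct) : Quaternion ℝ := Prod.snd p

instance : NormedAddCommGroup Oct :=
  inferInstanceAs (NormedAddCommGroup (Quaternion ℝ × Quaternion ℝ))
instance : NormedSpace ℝ Oct :=
  inferInstanceAs (NormedSpace ℝ (Quaternion ℝ × Quaternion ℝ))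
instance : MeasurableSpace Oct := borel Oct

instance : One Oct := ⟨((1 : Quaternion ℝ), (0 : Quaternion ℝ))⟩

/-- Cayley–Dickson multiplication on 𝕆 = ℍ × ℍ. -/
instance : Mul Oct := ⟨fun p q =>
  (fst p * fst q - star (snd q) * snd p, snd q * fst p + snd p * star (fst q))⟩

/-- Octonionic conjugation. -/
def conj (p : Oct) : Oct := (star (fst p), -(snd p))

/-- Real part of an octonion. -/
def re (p : Oct) : ℝ := (fst p).re

/-- |p|² = Re(p p̄). -/
def normSq (p : Oct) : ℝ := re (p * conj p)

/-- Embedding of the reals into the octonions. -/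
def ofReal (r : ℝ) : Oct := ((r : Quaternion ℝ), (0 : Quaternion ℝ))

end Oct

theorem Oct.mul_def (p q : Oct) : p * q =
    ((Oct.fst p * Oct.fst q - star (Oct.snd q) * Oct.snd p,
      Oct.snd q * Oct.fst p + Oct.snd p * star (Oct.fst q)) : Quaternion ℝ × Quaternion ℝ) := rfl

theorem Oct.mul_mk (a1 a2 b1 b2 : Quaternion ℝ) : @HMul.hMul Oct Oct Oct _ (a1, a2) (b1, b2) =
    ((a1 * b1 - star b2 * a2, b2 * a1 + a2 * star b1) : Quaternion ℝ × Quaternion ℝ) := rfl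

/-- Re((āb)(ca)) = |a|² Re(bc). -/
theorem re_conj_mul (a b c : Oct) :
    Oct.re ((Oct.conj a * b) * (c * a)) = Oct.normSq a * Oct.re (b * c) := by
  obtain ⟨a1, a2⟩ := a
  obtain ⟨b1, b2⟩ := b
  obtain ⟨c1, c2⟩ := c
  simp only [Oct.re, Oct.normSq, Oct.conj, Oct.fst, Oct.snd, Oct.mul_def, Oct.mul_mk]
  simp only [Quaternion.re_sub, Quaternion.re_add, Quaternion.re_mul,
    Quaternion.re_star, Quaternion.imI_star, Quaternion.imJ_star, Quaternion.imK_star,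
    Quaternion.re_neg, Quaternion.imI_neg, Quaternion.imJ_neg, Quaternion.imK_neg,
    Quaternion.imI_sub, Quaternion.imJ_sub, Quaternion.imK_sub,
    Quaternion.imI_add, Quaternion.imJ_add, Quaternion.imK_add,
    Quaternion.imI_mul, Quaternion.imJ_mul, Quaternion.imK_mul]
  ring
end
end

section
/- A 2×2 octonionic hermitian matrix A is non-negative definite if and only if Re(Tr(AB)) ≥ 0 for every non-negative definite octonionic hermitian 2×2 matrix B, where Tr denotes the sum of diagonal entries. -/
noncomputable section

namespace OctAux

open Quaternion

lemma re_mul_comm (x y : Quaternion ℝ) : (x * y).re = (y * x).re := by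
  simp only [Quaternion.re_mul]; ring

lemma re_mul_conj (p q : Oct) :
    Oct.re (p * Oct.conj q) = inner ℝ p.1 q.1 + inner ℝ p.2 q.2 := by
  show (Oct.fst p * star (Oct.fst q) - star (-(Oct.snd q)) * Oct.snd p).re
      = inner ℝ p.1 q.1 + inner ℝ p.2 q.2
  rw [Quaternion.inner_def, Quaternion.inner_def]
  simp only [star_neg, neg_mul, sub_neg_eq_add, Quaternion.re_add]
  rw [re_mul_comm (star (Oct.snd q)) (Oct.snd p)]
  rfl

lemma normSq_eq (p : Oct) : Oct.normSq p = ‖p.1‖ ^ 2 + ‖p.2‖ ^ 2 := by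
  have := re_mul_conj p p
  rw [Oct.normSq, this, real_inner_self_eq_norm_sq, real_inner_self_eq_norm_sq]

lemma normSq_nonneg (p : Oct) : 0 ≤ Oct.normSq p := by
  rw [normSq_eq]; positivity

lemma conj_neg (p : Oct) : Oct.conj (-p) = -Oct.conj p := Prod.ext (star_neg _) rfl

lemma re_mul_conj_neg (p : Oct) : Oct.re (p * Oct.conj (-p)) = -Oct.normSq p := by
  have h1 : (-p : Oct).1 = -(p.1) := rfl
  have h2 : (-p : Oct).2 = -(p.2) := rfl
  rw [re_mul_conj, normSq_eq, h1, h2, inner_neg_right, inner_neg_right,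
    real_inner_self_eq_norm_sq, real_inner_self_eq_norm_sq]
  ring

lemma normSq_neg (p : Oct) : Oct.normSq (-p) = Oct.normSq p := by
  have h1 : (-p : Oct).1 = -(p.1) := rfl
  have h2 : (-p : Oct).2 = -(p.2) := rfl
  rw [normSq_eq, normSq_eq, h1, h2, norm_neg, norm_neg]

/-- Cauchy–Schwarz for the octonionic pairing. -/
lemma cs (p q : Oct) :
    (Oct.re (p * Oct.conj q)) ^ 2 ≤ Oct.normSq p * Oct.normSq q := by
  rw [re_mul_conj, normSq_eq, normSq_eq]
  set i1 := (inner ℝ p.1 q.1 : ℝ)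
  set i2 := (inner ℝ p.2 q.2 : ℝ)
  have h1 := abs_real_inner_le_norm p.1 q.1
  have h2 := abs_real_inner_le_norm p.2 q.2
  have step1 : (i1 + i2) ^ 2 ≤ (|i1| + |i2|) ^ 2 := by
    rw [← sq_abs (i1 + i2)]
    exact pow_le_pow_left₀ (abs_nonneg _) (abs_add_le _ _) 2
  have step2 : (|i1| + |i2|) ^ 2 ≤ (‖p.1‖ * ‖q.1‖ + ‖p.2‖ * ‖q.2‖) ^ 2 := by
    apply pow_le_pow_left₀ (by positivity)
    exact add_le_add h1 h2
  have step3 : (‖p.1‖ * ‖q.1‖ + ‖p.2‖ * ‖q.2‖) ^ 2 ≤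
      (‖p.1‖ ^ 2 + ‖p.2‖ ^ 2) * (‖q.1‖ ^ 2 + ‖q.2‖ ^ 2) := by
    nlinarith [sq_nonneg (‖p.1‖ * ‖q.2‖ - ‖p.2‖ * ‖q.1‖)]
  linarith

end OctAux

/-- A = [[a,p],[p̄,b]] is non-negative definite iff Re(Tr(AB)) ≥ 0 for all non-negative
definite octonionic hermitian B = [[c,q],[q̄,d]]. -/
theorem nonneg_iff_trace_pairing (a b : ℝ) (p : Oct) :
    (0 ≤ a ∧ 0 ≤ b ∧ Oct.normSq p ≤ a * b) ↔
      (∀ (c d : ℝ) (q : Oct), 0 ≤ c → 0 ≤ d → Oct.normSq q ≤ c * d →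
        0 ≤ a * c + b * d + 2 * Oct.re (p * Oct.conj q)) := by
  constructor
  · rintro ⟨ha, hb, hab⟩ c d q hc hd hcd
    have hcs := OctAux.cs p q
    have hnp := OctAux.normSq_nonneg p
    have hnq := OctAux.normSq_nonneg q
    nlinarith [sq_nonneg (a * c - b * d), sq_nonneg (a * c + b * d),
      mul_nonneg ha hc, mul_nonneg hb hd,
      mul_le_mul hab hcd hnq (mul_nonneg ha hb)]
  · intro h
    have ha : 0 ≤ a := by
      have := h 1 0 0 zero_le_one le_rfl (by rw [OctAux.normSq_eq]; simp [show (0 : Oct).1 = 0 from rfl, show (0 : Oct).2 = 0 from rfl])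
      have h0 : Oct.re (p * Oct.conj 0) = 0 := by
        rw [OctAux.re_mul_conj]
        have e1 : (0 : Oct).1 = 0 := rfl
        have e2 : (0 : Oct).2 = 0 := rfl
        rw [e1, e2, inner_zero_right, inner_zero_right, add_zero]
      simpa [h0] using this
    have hb : 0 ≤ b := by
      have := h 0 1 0 le_rfl zero_le_one (by rw [OctAux.normSq_eq]; simp [show (0 : Oct).1 = 0 from rfl, show (0 : Oct).2 = 0 from rfl])
      have h0 : Oct.re (p * Oct.conj 0) = 0 := by
        rw [OctAux.re_mul_conj]
        have e1 : (0 : Oct).1 = 0 := rfl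
        have e2 : (0 : Oct).2 = 0 := rfl
        rw [e1, e2, inner_zero_right, inner_zero_right, add_zero]
      simpa [h0] using this
    refine ⟨ha, hb, ?_⟩
    set n := Oct.normSq p with hn
    have hn0 : 0 ≤ n := OctAux.normSq_nonneg p
    rcases eq_or_lt_of_le hn0 with heq | hpos
    · rw [← heq]; exact mul_nonneg ha hb
    -- n > 0
    rcases eq_or_lt_of_le ha with haz | hapos
    · -- a = 0 : take c = b+1, d = n/(b+1), q = -p; derive contradiction
      exfalso
      have hb1 : (0:ℝ) < b + 1 := by linarith
      have key := h (b + 1) (n / (b + 1)) (-p) (le_of_lt hb1)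
        (le_of_lt (div_pos hpos hb1))
        (by rw [OctAux.normSq_neg, ← hn, mul_div_cancel₀ _ (ne_of_gt hb1)])
      rw [OctAux.re_mul_conj_neg, ← hn] at key
      rw [← haz] at key
      have hbn : b * (n / (b + 1)) < n := by
        rw [div_eq_inv_mul, ← mul_assoc]
        have : b * (b+1)⁻¹ < 1 := by
          rw [mul_inv_lt_iff₀ hb1]; linarith
        nlinarith
      linarith
    rcases eq_or_lt_of_le hb with hbz | hbpos
    · exfalso
      have ha1 : (0:ℝ) < a + 1 := by linarith
      have key := h (n / (a + 1)) (a + 1) (-p)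
        (le_of_lt (div_pos hpos ha1)) (le_of_lt ha1)
        (by rw [OctAux.normSq_neg, ← hn, div_mul_cancel₀ _ (ne_of_gt ha1)])
      rw [OctAux.re_mul_conj_neg, ← hn] at key
      rw [← hbz] at key
      have han : a * (n / (a + 1)) < n := by
        rw [div_eq_inv_mul, ← mul_assoc]
        have : a * (a+1)⁻¹ < 1 := by
          rw [mul_inv_lt_iff₀ ha1]; linarith
        nlinarith
      linarith
    -- a > 0, b > 0
    set s := Real.sqrt n with hs
    have hs0 : 0 < s := Real.sqrt_pos.mpr hpos
    have hss : s * s = n := Real.mul_self_sqrt hn0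
    set t := Real.sqrt (b / a) with ht
    have ht0 : 0 < t := Real.sqrt_pos.mpr (div_pos hbpos hapos)
    have htt : t * t = b / a := Real.mul_self_sqrt (le_of_lt (div_pos hbpos hapos))
    have key := h (s * t) (s / t) (-p)
      (le_of_lt (mul_pos hs0 ht0)) (le_of_lt (div_pos hs0 ht0))
      (by rw [OctAux.normSq_neg, ← hn,
            show s * t * (s / t) = s * s * (t / t) by ring,
            div_self (ne_of_gt ht0), mul_one, hss])
    rw [OctAux.re_mul_conj_neg, ← hn] at key
    -- key : 0 ≤ a * (s * t) + b * (s / t) + 2 * -n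
    have hb' : a * (t * t) = b := by
      rw [htt]; field_simp
    have hbst : b * (s / t) = a * t * s := by
      rw [← hb']; field_simp
    have key' : n ≤ a * t * s := by
      rw [hbst] at key; linarith
    have h2 : s ≤ a * t := by
      have : s * s ≤ (a * t) * s := by rw [hss]; linarith
      exact le_of_mul_le_mul_right this hs0
    nlinarith [mul_self_le_mul_self (le_of_lt hs0) h2]
end
end

section
/- Let Ω ⊂ 𝕆² be open and let f: Ω → ℝ ∪ {−∞} be octonionic plurisubharmonic (upper semicontinuous with subharmonic restrictions to all affine octonionic lines). Then f is subharmonic on Ω ⊂ ℝ¹⁶: for every closed ball contained in Ω centered at x₀, f(x₀) is at most the average of f over the boundary sphere. -/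
noncomputable section

namespace Oct

lemma mul_def_s17 (p q : Oct) : p * q =
  (fst p * fst q - star (snd q) * snd p, snd q * fst p + snd p * star (fst q)) := rfl

lemma normSq_eq (p : Oct) :
    normSq p = Quaternion.normSq (fst p) + Quaternion.normSq (snd p) := by
  simp only [normSq, re]
  rw [mul_def_s17]
  simp [conj, fst, snd, Quaternion.normSq_def', Quaternion.re_mul, pow_two]

lemma normSq_nonneg (p : Oct) : 0 ≤ normSq p := by
  rw [normSq_eq]; exact add_nonneg (Quaternion.normSq_nonneg) (Quaternion.normSq_nonneg)

lemma normSq_eq_zero {p : Oct} (h : normSq p = 0) : p = 0 := by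
  rw [normSq_eq] at h
  have h1 : Quaternion.normSq (fst p) = 0 ∧ Quaternion.normSq (snd p) = 0 := by
    constructor <;> nlinarith [Quaternion.normSq_nonneg (a := fst p),
      Quaternion.normSq_nonneg (a := snd p)]
  have e1 : fst p = 0 := Quaternion.normSq_eq_zero.1 h1.1
  have e2 : snd p = 0 := Quaternion.normSq_eq_zero.1 h1.2
  exact Prod.ext e1 e2

lemma normSq_mul (p q : Oct) : normSq (p * q) = normSq p * normSq q := by
  rw [normSq_eq, normSq_eq, normSq_eq]
  simp only [mul_def_s17, fst, snd]
  obtain ⟨a, b⟩ := p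
  obtain ⟨c, d⟩ := q
  simp only [Quaternion.normSq_def', Quaternion.re_mul, Quaternion.imI_mul,
    Quaternion.imJ_mul, Quaternion.imK_mul, Quaternion.re_sub, Quaternion.imI_sub,
    Quaternion.imJ_sub, Quaternion.imK_sub, Quaternion.re_add, Quaternion.imI_add,
    Quaternion.imJ_add, Quaternion.imK_add, Quaternion.re_star, Quaternion.imI_star,
    Quaternion.imJ_star, Quaternion.imK_star]
  ring

end Oct
namespace Oct

lemma oct_ext {p q : Oct} (h1 : fst p = fst q) (h2 : snd p = snd q) : p = q :=
  Prod.ext h1 h2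

lemma fst_mul (p q : Oct) : fst (p * q) = fst p * fst q - star (snd q) * snd p := rfl
lemma snd_mul (p q : Oct) : snd (p * q) = snd q * fst p + snd p * star (fst q) := rfl
lemma fst_add (p q : Oct) : fst (p + q) = fst p + fst q := rfl
lemma snd_add (p q : Oct) : snd (p + q) = snd p + snd q := rfl
lemma fst_smul (r : ℝ) (p : Oct) : fst (r • p) = r • fst p := rfl
lemma snd_smul (r : ℝ) (p : Oct) : snd (r • p) = r • snd p := rfl
lemma fst_zero : fst (0 : Oct) = 0 := rfl
lemma snd_zero : snd (0 : Oct) = 0 := rfl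

lemma add_mul' (p p' q : Oct) : (p + p') * q = p * q + p' * q := by
  apply oct_ext
  · simp only [fst_mul, fst_add, snd_add, snd_mul]; noncomm_ring
  · simp only [fst_mul, fst_add, snd_add, snd_mul]; noncomm_ring

lemma mul_add' (p q q' : Oct) : p * (q + q') = p * q + p * q' := by
  apply oct_ext
  · simp only [fst_mul, fst_add, snd_add, snd_mul, star_add]; noncomm_ring
  · simp only [fst_mul, fst_add, snd_add, snd_mul, star_add]; noncomm_ring

lemma smul_mul' (r : ℝ) (p q : Oct) : (r • p) * q = r • (p * q) := by
  apply oct_ext <;>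
  · simp only [fst_mul, fst_smul, snd_smul, snd_mul, smul_sub, smul_add,
      smul_mul_assoc, mul_smul_comm]

lemma mul_smul'' (r : ℝ) (p q : Oct) : p * (r • q) = r • (p * q) := by
  apply oct_ext <;>
  · simp only [fst_mul, fst_smul, snd_smul, snd_mul, Quaternion.star_smul,
      smul_sub, smul_add, smul_mul_assoc, mul_smul_comm]

lemma mul_zero' (p : Oct) : p * (0 : Oct) = 0 := by
  apply oct_ext <;>
    simp [fst_mul, snd_mul, fst_zero, snd_zero]

instance : FiniteDimensional ℝ Oct :=
  inferInstanceAs (FiniteDimensional ℝ (Quaternion ℝ × Quaternion ℝ))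

instance : BorelSpace Oct := ⟨rfl⟩

lemma continuous_fst' : Continuous fst :=
  (continuous_fst : Continuous (Prod.fst : Quaternion ℝ × Quaternion ℝ → _))

lemma continuous_snd' : Continuous snd :=
  (continuous_snd : Continuous (Prod.snd : Quaternion ℝ × Quaternion ℝ → _))

lemma continuous_mul' : Continuous (fun p : Oct × Oct => p.1 * p.2) := by
  have h1 : Continuous (fun p : Oct × Oct => fst p.1) := continuous_fst'.comp continuous_fst
  have h2 : Continuous (fun p : Oct × Oct => snd p.1) := continuous_snd'.comp continuous_fst
  have h3 : Continuous (fun p : Oct × Oct => fst p.2) := continuous_fst'.comp continuous_snd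
  have h4 : Continuous (fun p : Oct × Oct => snd p.2) := continuous_snd'.comp continuous_snd
  show Continuous (fun p : Oct × Oct =>
    ((fst p.1 * fst p.2 - star (snd p.2) * snd p.1,
      snd p.2 * fst p.1 + snd p.1 * star (fst p.2)) : Quaternion ℝ × Quaternion ℝ))
  exact ((h1.mul h3).sub (h4.star.mul h2)).prodMk ((h4.mul h1).add (h2.mul h3.star))

lemma normSq_one : normSq (1 : Oct) = 1 := by
  rw [normSq_eq]
  show Quaternion.normSq 1 + Quaternion.normSq 0 = 1
  simp

lemma continuous_normSq : Continuous normSq := by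
  have h : normSq = fun p => Quaternion.normSq (fst p) + Quaternion.normSq (snd p) :=
    funext normSq_eq
  rw [h]
  exact (Quaternion.continuous_normSq.comp continuous_fst').add
    (Quaternion.continuous_normSq.comp continuous_snd')

end Oct
open MeasureTheory

/-- The unit sphere S⁷ in the octonions. -/
abbrev Sphere7 : Type := {v : Oct // Oct.normSq v = 1}

/-- The squared Euclidean norm on 𝕆² ≅ ℝ¹⁶. -/
def normSq2 (w : Oct × Oct) : ℝ := Oct.normSq w.1 + Oct.normSq w.2

/-- The unit sphere S¹⁵ in 𝕆² ≅ ℝ¹⁶. -/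
abbrev Sphere15 : Type := {v : Oct × Oct // normSq2 v = 1}

/-- A rotation-invariant probability measure on S⁷. -/
def InvProb7 (μ : Measure Sphere7) : Prop :=
  IsProbabilityMeasure μ ∧
  ∀ e : Oct ≃ₗ[ℝ] Oct, ∀ he : (∀ w, Oct.normSq (e w) = Oct.normSq w),
    μ.map (fun v : Sphere7 => (⟨e ↑v, (he ↑v).trans v.2⟩ : Sphere7)) = μ

/-- A rotation-invariant probability measure on S¹⁵. -/
def InvProb15 (μ : Measure Sphere15) : Prop :=
  IsProbabilityMeasure μ ∧
  ∀ e : (Oct × Oct) ≃ₗ[ℝ] (Oct × Oct), ∀ he : (∀ w, normSq2 (e w) = normSq2 w),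
    μ.map (fun v : Sphere15 => (⟨e ↑v, (he ↑v).trans v.2⟩ : Sphere15)) = μ

/-- The average of an ℝ ∪ {−∞}-valued (upper semicontinuous) function with respect to a
measure, defined as the infimum of the integrals of its continuous real-valued majorants. -/
def erealAvg (X : Type) [TopologicalSpace X] [MeasurableSpace X]
    (μ : Measure X) (g : X → EReal) : EReal :=
  ⨅ φ : {φ : C(X, ℝ) // ∀ v, g v ≤ ((φ v : ℝ) : EReal)},
    ((∫ v, (φ : C(X, ℝ)) v ∂μ : ℝ) : EReal)

/-- The sub-mean-value property for an ℝ ∪ {−∞}-valued function of one octonionic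
variable on a domain D: whenever the closed ball of radius r around x₀ lies in D,
g(x₀) is at most the average of g over the sphere of radius r around x₀. -/
def SubMeanValueOn (g : Oct → EReal) (D : Set Oct) : Prop :=
  ∀ (x₀ : Oct) (r : ℝ), 0 < r →
    (∀ x : Oct, Oct.normSq (x - x₀) ≤ r ^ 2 → x ∈ D) →
    ∀ μ : Measure Sphere7, InvProb7 μ →
      g x₀ ≤ erealAvg Sphere7 μ (fun v => g (x₀ + r • (v : Oct)))

---- auxiliary development ----

lemma normSq2_nonneg (w : Oct × Oct) : 0 ≤ normSq2 w :=
  add_nonneg (Oct.normSq_nonneg _) (Oct.normSq_nonneg _)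

lemma normSq2_eq_zero {w : Oct × Oct} (h : normSq2 w = 0) : w = 0 := by
  have h' : Oct.normSq w.1 + Oct.normSq w.2 = 0 := h
  have h1 : Oct.normSq w.1 = 0 ∧ Oct.normSq w.2 = 0 := by
    constructor <;> nlinarith [Oct.normSq_nonneg w.1, Oct.normSq_nonneg w.2]
  exact Prod.ext (Oct.normSq_eq_zero h1.1) (Oct.normSq_eq_zero h1.2)

lemma continuous_normSq2 : Continuous normSq2 :=
  (Oct.continuous_normSq.comp continuous_fst).add (Oct.continuous_normSq.comp continuous_snd)

instance : BorelSpace (Oct × Oct) := Prod.borelSpace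

/-- the Euclidean model for 𝕆 -/
abbrev EOct : Type := WithLp 2 (Quaternion ℝ × Quaternion ℝ)

instance : MeasurableSpace EOct := borel EOct
instance : BorelSpace EOct := ⟨rfl⟩
instance : FiniteDimensional ℝ EOct :=
  Module.Finite.equiv (WithLp.linearEquiv 2 ℝ (Quaternion ℝ × Quaternion ℝ)).symm

def toOct (x : EOct) : Oct := WithLp.equiv 2 _ x

lemma normSq_toOct (x : EOct) : Oct.normSq (toOct x) = ‖x‖ ^ 2 := by
  rw [WithLp.prod_norm_sq_eq_of_L2, Oct.normSq_eq]
  simp [Quaternion.normSq_eq_norm_mul_self, pow_two]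
  rfl


section SphereStuff
open Metric Set

lemma continuous_toOct : Continuous toOct :=
  (WithLp.prodContinuousLinearEquiv 2 ℝ (Quaternion ℝ) (Quaternion ℝ)).continuous

lemma continuous_toOct_symm : Continuous (fun p : Oct => ((WithLp.equiv 2 _).symm p : EOct)) :=
  (WithLp.prodContinuousLinearEquiv 2 ℝ (Quaternion ℝ) (Quaternion ℝ)).symm.continuous

/-- Homeomorphism between the metric unit sphere of `EOct` and `Sphere7`. -/
def sphereHomeo : Metric.sphere (0 : EOct) 1 ≃ₜ Sphere7 where
  toFun x := ⟨toOct x.1, by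
    rw [normSq_toOct]
    have : ‖x.1‖ = 1 := by simpa using mem_sphere_zero_iff_norm.1 x.2
    rw [this]; norm_num⟩
  invFun v := ⟨(WithLp.equiv 2 _).symm v.1, by
    rw [mem_sphere_zero_iff_norm]
    have h : Oct.normSq (toOct ((WithLp.equiv 2 _).symm v.1)) = 1 := by
      exact v.2
    rw [normSq_toOct] at h
    nlinarith [norm_nonneg ((WithLp.equiv 2 (Quaternion ℝ × Quaternion ℝ)).symm v.1 : EOct)]⟩
  left_inv x := Subtype.ext rfl
  right_inv v := Subtype.ext rfl
  continuous_toFun := by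
    apply Continuous.subtype_mk (continuous_toOct.comp continuous_subtype_val)
  continuous_invFun := by
    apply Continuous.subtype_mk (continuous_toOct_symm.comp continuous_subtype_val)

instance : CompactSpace Sphere7 := sphereHomeo.compactSpace

instance : CompactSpace Sphere15 := by
  have h : IsCompact {v : Oct × Oct | normSq2 v = 1} := by
    apply IsCompact.of_isClosed_subset (isCompact_closedBall (0 : Oct × Oct) 2)
    · exact isClosed_eq continuous_normSq2 continuous_const
    · intro w hw
      simp only [Set.mem_setOf_eq] at hw
      have h1 : Oct.normSq w.1 + Oct.normSq w.2 = 1 := hw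
      have hb : ∀ q : Quaternion ℝ, Quaternion.normSq q ≤ 1 → ‖q‖ ≤ 2 := by
        intro q hq
        rw [Quaternion.normSq_eq_norm_mul_self] at hq
        nlinarith [norm_nonneg q]
      have hw1 : ‖w.1‖ ≤ 2 := by
        have : Quaternion.normSq (Oct.fst w.1) + Quaternion.normSq (Oct.snd w.1) ≤ 1 := by
          rw [← Oct.normSq_eq]; nlinarith [Oct.normSq_nonneg w.2]
        have e1 := hb (Oct.fst w.1) (by nlinarith [Quaternion.normSq_nonneg (a := Oct.snd w.1)])
        have e2 := hb (Oct.snd w.1) (by nlinarith [Quaternion.normSq_nonneg (a := Oct.fst w.1)])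
        show max ‖Oct.fst w.1‖ ‖Oct.snd w.1‖ ≤ 2
        exact max_le e1 e2
      have hw2 : ‖w.2‖ ≤ 2 := by
        have : Quaternion.normSq (Oct.fst w.2) + Quaternion.normSq (Oct.snd w.2) ≤ 1 := by
          rw [← Oct.normSq_eq]; nlinarith [Oct.normSq_nonneg w.1]
        have e1 := hb (Oct.fst w.2) (by nlinarith [Quaternion.normSq_nonneg (a := Oct.snd w.2)])
        have e2 := hb (Oct.snd w.2) (by nlinarith [Quaternion.normSq_nonneg (a := Oct.fst w.2)])
        show max ‖Oct.fst w.2‖ ‖Oct.snd w.2‖ ≤ 2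
        exact max_le e1 e2
      rw [mem_closedBall_zero_iff]
      exact max_le hw1 hw2
  exact isCompact_iff_compactSpace.mp h

end SphereStuff
section InvMeasure
open Metric Set MeasureTheory Pointwise

def prodToOct : (Quaternion ℝ × Quaternion ℝ) ≃ₗ[ℝ] Oct where
  toFun p := p
  map_add' _ _ := rfl
  map_smul' _ _ := rfl
  invFun p := p
  left_inv _ := rfl
  right_inv _ := rfl

variable {e : Oct ≃ₗ[ℝ] Oct} (he : ∀ w, Oct.normSq (e w) = Oct.normSq w)

/-- The conjugated linear isometry equivalence on the Euclidean model. -/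
def isomE (e : Oct ≃ₗ[ℝ] Oct) (he : ∀ w, Oct.normSq (e w) = Oct.normSq w) :
    EOct ≃ₗᵢ[ℝ] EOct :=
  { (WithLp.linearEquiv 2 ℝ (Quaternion ℝ × Quaternion ℝ)).trans
      (prodToOct.trans (e.trans (prodToOct.symm.trans
        (WithLp.linearEquiv 2 ℝ (Quaternion ℝ × Quaternion ℝ)).symm))) with
    norm_map' := by
      intro x
      have h1 : Oct.normSq (e (toOct x)) = Oct.normSq (toOct x) := he _
      have h2 : toOct (((WithLp.linearEquiv 2 ℝ (Quaternion ℝ × Quaternion ℝ)).trans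
          (prodToOct.trans (e.trans (prodToOct.symm.trans
            (WithLp.linearEquiv 2 ℝ (Quaternion ℝ × Quaternion ℝ)).symm)))) x)
          = e (toOct x) := rfl
      have h3 := normSq_toOct (((WithLp.linearEquiv 2 ℝ (Quaternion ℝ × Quaternion ℝ)).trans
          (prodToOct.trans (e.trans (prodToOct.symm.trans
            (WithLp.linearEquiv 2 ℝ (Quaternion ℝ × Quaternion ℝ)).symm)))) x)
      rw [h2, h1, normSq_toOct] at h3
      have := norm_nonneg (((WithLp.linearEquiv 2 ℝ (Quaternion ℝ × Quaternion ℝ)).trans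
          (prodToOct.trans (e.trans (prodToOct.symm.trans
            (WithLp.linearEquiv 2 ℝ (Quaternion ℝ × Quaternion ℝ)).symm)))) x)
      nlinarith [norm_nonneg x] }

lemma isomE_apply (e : Oct ≃ₗ[ℝ] Oct) (he : ∀ w, Oct.normSq (e w) = Oct.normSq w)
    (x : EOct) : toOct (isomE e he x) = e (toOct x) := rfl

/-- restriction of `isomE` to the unit sphere. -/
def isomSphere (e : Oct ≃ₗ[ℝ] Oct) (he : ∀ w, Oct.normSq (e w) = Oct.normSq w) :
    Metric.sphere (0 : EOct) 1 → Metric.sphere (0 : EOct) 1 :=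
  fun x => ⟨isomE e he x, by
    rw [mem_sphere_zero_iff_norm, (isomE e he).norm_map]
    exact mem_sphere_zero_iff_norm.1 x.2⟩

lemma continuous_isomSphere (e : Oct ≃ₗ[ℝ] Oct)
    (he : ∀ w, Oct.normSq (e w) = Oct.normSq w) : Continuous (isomSphere e he) := by
  apply Continuous.subtype_mk ((isomE e he).continuous.comp continuous_subtype_val)

lemma smul_preimage_linear (T : Set ℝ) (g : EOct ≃ₗᵢ[ℝ] EOct) (A : Set EOct) :
    T • (⇑g ⁻¹' A) = ⇑g ⁻¹' (T • A) := by
  ext x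
  simp only [Set.mem_smul, Set.mem_preimage]
  constructor
  · rintro ⟨t, ht, y, hy, rfl⟩
    exact ⟨t, ht, g y, hy, (map_smul g t y).symm⟩
  · rintro ⟨t, ht, y, hy, hx⟩
    refine ⟨t, ht, g.symm y, by simp [hy], ?_⟩
    calc t • g.symm y = g.symm (t • y) := (map_smul g.symm t y).symm
      _ = g.symm (g x) := by rw [hx]
      _ = x := g.symm_apply_apply x

end InvMeasure
section NuConstruction
open Metric Set MeasureTheory Pointwise
open scoped ENNReal NNReal

instance : BorelSpace Sphere7 := Subtype.borelSpace {v : Oct | Oct.normSq v = 1}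
instance : BorelSpace Sphere15 := Subtype.borelSpace {v : Oct × Oct | normSq2 v = 1}

lemma coe_image_preimage_isomSphere (e : Oct ≃ₗ[ℝ] Oct)
    (he : ∀ w, Oct.normSq (e w) = Oct.normSq w) (s : Set (Metric.sphere (0 : EOct) 1)) :
    ((↑) '' (isomSphere e he ⁻¹' s) : Set EOct) = ⇑(isomE e he) ⁻¹' ((↑) '' s) := by
  ext x
  constructor
  · rintro ⟨x', hx', rfl⟩
    exact ⟨isomSphere e he x', hx', rfl⟩
  · rintro ⟨v, hv, hvx⟩
    have hxmem : x ∈ Metric.sphere (0 : EOct) 1 := by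
      rw [mem_sphere_zero_iff_norm, ← (isomE e he).norm_map x, ← hvx]
      exact mem_sphere_zero_iff_norm.1 v.2
    refine ⟨⟨x, hxmem⟩, ?_, rfl⟩
    show isomSphere e he ⟨x, hxmem⟩ ∈ s
    have : isomSphere e he ⟨x, hxmem⟩ = v := Subtype.ext hvx.symm
    rw [this]; exact hv

lemma toSphere_map_isomSphere (e : Oct ≃ₗ[ℝ] Oct)
    (he : ∀ w, Oct.normSq (e w) = Oct.normSq w) :
    ((volume : Measure EOct).toSphere).map (isomSphere e he) = (volume : Measure EOct).toSphere := by
  ext s hs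
  rw [Measure.map_apply (continuous_isomSphere e he).measurable hs]
  rw [Measure.toSphere_apply' _ ((continuous_isomSphere e he).measurable hs),
    Measure.toSphere_apply' _ hs]
  congr 1
  rw [coe_image_preimage_isomSphere, smul_preimage_linear]
  exact (isomE e he).measurePreserving.measure_preimage_emb
    ((isomE e he).toHomeomorph.measurableEmbedding) _

/-- The uniform probability measure on S⁷. -/
def nu : Measure Sphere7 :=
  ((((volume : Measure EOct).toSphere) Set.univ)⁻¹ • ((volume : Measure EOct).toSphere)).map
    sphereHomeo

lemma toSphere_univ_pos : 0 < ((volume : Measure EOct).toSphere) Set.univ := by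
  rw [Measure.toSphere_apply_univ]
  have h1 : (0:ℝ≥0∞) < (Module.finrank ℝ EOct : ℝ≥0∞) := by
    have : 0 < Module.finrank ℝ EOct := Module.finrank_pos
    exact_mod_cast this
  exact ENNReal.mul_pos h1.ne' (measure_ball_pos _ _ one_pos).ne'

lemma toSphere_univ_ne_top : ((volume : Measure EOct).toSphere) Set.univ ≠ ⊤ :=
  measure_ne_top _ _

instance : IsProbabilityMeasure nu := by
  constructor
  rw [nu, Measure.map_apply sphereHomeo.continuous.measurable MeasurableSet.univ]
  simp only [Set.preimage_univ, Measure.smul_apply, smul_eq_mul]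
  exact ENNReal.inv_mul_cancel toSphere_univ_pos.ne' toSphere_univ_ne_top

lemma invProb7_nu : InvProb7 nu := by
  refine ⟨inferInstance, ?_⟩
  intro e he
  have key : (fun v : Sphere7 => (⟨e ↑v, (he ↑v).trans v.2⟩ : Sphere7)) ∘ ⇑sphereHomeo
      = ⇑sphereHomeo ∘ isomSphere e he := by
    funext x
    exact Subtype.ext rfl
  rw [nu, Measure.map_map ?hg sphereHomeo.continuous.measurable]
  case hg =>
    exact Measurable.subtype_mk
      ((e.toContinuousLinearEquiv.continuous.comp continuous_subtype_val).measurable)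
  rw [key, ← Measure.map_map sphereHomeo.continuous.measurable
    (continuous_isomSphere e he).measurable]
  rw [Measure.map_smul, toSphere_map_isomSphere]

end NuConstruction
section MulLin
open MeasureTheory

/-- right multiplication by `u` on 𝕆², as a linear map. -/
def mulLin (u : Oct) : (Oct × Oct) →ₗ[ℝ] (Oct × Oct) where
  toFun ξ := (ξ.1 * u, ξ.2 * u)
  map_add' ξ η := by
    simp only [Prod.fst_add, Prod.snd_add, Oct.add_mul', Prod.mk_add_mk]
  map_smul' r ξ := by
    simp only [Prod.smul_fst, Prod.smul_snd, Oct.smul_mul', RingHom.id_apply, Prod.smul_mk]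

lemma normSq2_mulLin (u : Oct) (ξ : Oct × Oct) :
    normSq2 (mulLin u ξ) = normSq2 ξ * Oct.normSq u := by
  show Oct.normSq (ξ.1 * u) + Oct.normSq (ξ.2 * u) = (Oct.normSq ξ.1 + Oct.normSq ξ.2) * _
  rw [Oct.normSq_mul, Oct.normSq_mul]; ring

lemma mulLin_injective {u : Oct} (hu : Oct.normSq u = 1) : Function.Injective (mulLin u) := by
  intro ξ η h
  have h0 : mulLin u (ξ - η) = 0 := by rw [map_sub, h, sub_self]
  have h1 : normSq2 (ξ - η) = 0 := by
    have := normSq2_mulLin u (ξ - η)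
    rw [h0, hu, mul_one] at this
    have hz : normSq2 (0 : Oct × Oct) = 0 := by
      show Oct.normSq 0 + Oct.normSq 0 = 0
      have : Oct.normSq 0 = 0 := by
        rw [Oct.normSq_eq]; show Quaternion.normSq 0 + Quaternion.normSq 0 = 0; simp
      rw [this]; ring
    rw [hz] at this
    exact this.symm
  exact sub_eq_zero.1 (normSq2_eq_zero h1)

/-- right multiplication by a unit octonion as a linear equivalence of 𝕆². -/
def mulEquiv (u : Oct) (hu : Oct.normSq u = 1) : (Oct × Oct) ≃ₗ[ℝ] (Oct × Oct) :=
  LinearEquiv.ofInjectiveEndo (mulLin u) (mulLin_injective hu)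

lemma mulEquiv_apply (u : Oct) (hu : Oct.normSq u = 1) (ξ : Oct × Oct) :
    mulEquiv u hu ξ = (ξ.1 * u, ξ.2 * u) := rfl

/-- the map S¹⁵ × S⁷ → S¹⁵. -/
def s15 (ξ : Sphere15) (u : Sphere7) : Sphere15 :=
  ⟨((ξ : Oct × Oct).1 * (u : Oct), (ξ : Oct × Oct).2 * (u : Oct)), by
    have h : normSq2 ((ξ : Oct × Oct).1 * (u : Oct), (ξ : Oct × Oct).2 * (u : Oct))
        = normSq2 (ξ : Oct × Oct) * Oct.normSq (u : Oct) := normSq2_mulLin _ _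
    rw [h, ξ.2, u.2, one_mul]⟩

lemma continuous_s15 : Continuous (fun p : Sphere15 × Sphere7 => s15 p.1 p.2) := by
  apply Continuous.subtype_mk
  apply Continuous.prodMk
  · exact Oct.continuous_mul'.comp
      (((continuous_fst.comp (continuous_subtype_val.comp continuous_fst))).prodMk
        (continuous_subtype_val.comp continuous_snd))
  · exact Oct.continuous_mul'.comp
      (((continuous_snd.comp (continuous_subtype_val.comp continuous_fst))).prodMk
        (continuous_subtype_val.comp continuous_snd))

end MulLin
section Main
open MeasureTheory
set_option maxHeartbeats 1000000

lemma erealAvg_le (X : Type) [TopologicalSpace X] [MeasurableSpace X]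
    (μ : Measure X) (g : X → EReal) (ψ : C(X, ℝ)) (h : ∀ v, g v ≤ ((ψ v : ℝ) : EReal)) :
    erealAvg X μ g ≤ ((∫ v, ψ v ∂μ : ℝ) : EReal) :=
  iInf_le (fun φ : {φ : C(X, ℝ) // ∀ v, g v ≤ ((φ v : ℝ) : EReal)} =>
    ((∫ v, (φ : C(X, ℝ)) v ∂μ : ℝ) : EReal)) ⟨ψ, h⟩

/-- Any octonionic plurisubharmonic function (upper semicontinuous, with subharmonic
restrictions to all affine octonionic lines) on an open set Ω ⊂ 𝕆² is subharmonic on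
Ω ⊂ ℝ¹⁶: for every closed ball contained in Ω centered at x₀, f(x₀) is at most the
average of f over the boundary sphere. -/
theorem octonionic_psh_is_subharmonic (Ω : Set (Oct × Oct)) (hΩ : IsOpen Ω)
    (f : Oct × Oct → EReal)
    (husc : UpperSemicontinuousOn f Ω)
    (hlines : ∀ z ξ : Oct × Oct, ξ ≠ 0 →
      SubMeanValueOn (fun x : Oct => f (z + (ξ.1 * x, ξ.2 * x)))
        {x : Oct | z + (ξ.1 * x, ξ.2 * x) ∈ Ω}) :
    ∀ (x₀ : Oct × Oct) (r : ℝ), 0 < r →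
      (∀ w : Oct × Oct, normSq2 (w - x₀) ≤ r ^ 2 → w ∈ Ω) →
      ∀ μ : Measure Sphere15, InvProb15 μ →
        f x₀ ≤ erealAvg Sphere15 μ (fun v => f (x₀ + r • (v : Oct × Oct))) := by
  intro x₀ r hr hball μ hμ
  obtain ⟨hμp, hμinv⟩ := hμ
  rw [erealAvg]
  apply le_iInf
  rintro ⟨φ, hφ⟩
  simp only
  -- the function H and its marginal F
  set H : Sphere15 → Sphere7 → ℝ := fun ξ u => φ (s15 ξ u) with hH
  set F : Sphere15 → ℝ := fun ξ => ∫ u, H ξ u ∂nu with hF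
  -- Step 1 : f x₀ ≤ F ξ for every ξ
  have step1 : ∀ ξ : Sphere15, f x₀ ≤ ((F ξ : ℝ) : EReal) := by
    intro ξ
    have hξne : (ξ : Oct × Oct) ≠ 0 := by
      intro h0
      have := ξ.2
      rw [h0] at this
      have hz : normSq2 (0 : Oct × Oct) = 0 := by
        show Oct.normSq 0 + Oct.normSq 0 = 0
        have h00 : Oct.normSq 0 = 0 := by
          rw [Oct.normSq_eq]; show Quaternion.normSq 0 + Quaternion.normSq 0 = 0; simp
        rw [h00]; ring
      rw [hz] at this
      norm_num at this
    have hsm := hlines x₀ (ξ : Oct × Oct) hξne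
    have hD : ∀ x : Oct, Oct.normSq (x - 0) ≤ r ^ 2 →
        x ∈ {x : Oct | x₀ + ((ξ : Oct × Oct).1 * x, (ξ : Oct × Oct).2 * x) ∈ Ω} := by
      intro x hx
      rw [sub_zero] at hx
      apply hball
      have key : (x₀ + ((ξ : Oct × Oct).1 * x, (ξ : Oct × Oct).2 * x)) - x₀
          = ((ξ : Oct × Oct).1 * x, (ξ : Oct × Oct).2 * x) := add_sub_cancel_left _ _
      rw [key]
      have h2 : normSq2 ((ξ : Oct × Oct).1 * x, (ξ : Oct × Oct).2 * x)
          = normSq2 (ξ : Oct × Oct) * Oct.normSq x := normSq2_mulLin _ _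
      rw [h2, ξ.2, one_mul]
      exact hx
    have happly := hsm 0 r hr hD nu invProb7_nu
    have h0 : f (x₀ + ((ξ : Oct × Oct).1 * (0:Oct), (ξ : Oct × Oct).2 * (0:Oct))) = f x₀ := by
      rw [Oct.mul_zero', Oct.mul_zero']
      exact congrArg f (add_zero x₀)
    beta_reduce at happly
    rw [h0] at happly
    refine happly.trans ?_
    -- bound the erealAvg by the integral of the continuous majorant φ ∘ s15 ξ
    have hcont : Continuous (fun u : Sphere7 => s15 ξ u) :=
      continuous_s15.comp (Continuous.prodMk_right ξ)
    have hmaj : ∀ u : Sphere7,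
        f (x₀ + ((ξ : Oct × Oct).1 * ((0:Oct) + r • (u : Oct)),
          (ξ : Oct × Oct).2 * ((0:Oct) + r • (u : Oct))))
        ≤ ((φ (s15 ξ u) : ℝ) : EReal) := by
      intro u
      have harg : (x₀ + ((ξ : Oct × Oct).1 * ((0:Oct) + r • (u : Oct)),
          (ξ : Oct × Oct).2 * ((0:Oct) + r • (u : Oct))))
          = x₀ + r • ((s15 ξ u : Oct × Oct)) := by
        rw [zero_add, Oct.mul_smul'', Oct.mul_smul'']
        rfl
      rw [harg]
      exact hφ (s15 ξ u)
    exact erealAvg_le Sphere7 nu _ (φ.comp ⟨fun u => s15 ξ u, hcont⟩) fun u => hmaj u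
  -- Step 2 : Fubini and invariance
  have contH : Continuous (Function.uncurry H) := φ.continuous.comp continuous_s15
  have hHint : Integrable (Function.uncurry H) (μ.prod nu) :=
    contH.integrable_of_hasCompactSupport (HasCompactSupport.of_compactSpace _)
  have hFint : Integrable F μ := hHint.integral_prod_left
  have hinner : ∀ u : Sphere7, (∫ ξ, H ξ u ∂μ) = ∫ v, φ v ∂μ := by
    intro u
    have he_u : ∀ w : Oct × Oct, normSq2 (mulEquiv (u : Oct) u.2 w) = normSq2 w := by
      intro w
      rw [mulEquiv_apply, show normSq2 (w.1 * (u:Oct), w.2 * (u:Oct))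
        = normSq2 w * Oct.normSq (u:Oct) from normSq2_mulLin _ _, u.2, mul_one]
    have hG := hμinv (mulEquiv (u : Oct) u.2) he_u
    set G : Sphere15 → Sphere15 := fun v =>
      (⟨mulEquiv (u : Oct) u.2 ↑v, (he_u ↑v).trans v.2⟩ : Sphere15) with hGdef
    have hGmeas : Measurable G := by
      apply Measurable.subtype_mk
      exact ((mulEquiv (u : Oct) u.2).toContinuousLinearEquiv.continuous.comp
        continuous_subtype_val).measurable
    have hHGu : (fun ξ : Sphere15 => H ξ u) = fun ξ => φ (G ξ) := by
      funext ξ; exact congrArg φ (Subtype.ext rfl)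
    rw [hHGu]
    rw [← integral_map hGmeas.aemeasurable φ.continuous.aestronglyMeasurable]
    rw [show μ.map G = μ from hG]
  have hswap : (∫ ξ, F ξ ∂μ) = ∫ v, φ v ∂μ := by
    rw [hF]
    rw [integral_integral_swap hHint]
    have : (fun u : Sphere7 => ∫ ξ, H ξ u ∂μ) = fun _ => ∫ v, φ v ∂μ := funext hinner
    rw [this, integral_const]
    simp
  -- Step 3 : conclude
  have hne : f x₀ ≠ ⊤ := by
    have h1 := step1 ⟨((1 : Oct), (0 : Oct)), by
      show Oct.normSq 1 + Oct.normSq 0 = 1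
      rw [Oct.normSq_one]
      have h00 : Oct.normSq 0 = 0 := by
        rw [Oct.normSq_eq]; show Quaternion.normSq 0 + Quaternion.normSq 0 = 0; simp
      rw [h00]; ring⟩
    intro htop
    rw [htop] at h1
    exact (EReal.coe_lt_top _).not_ge (le_of_eq (top_le_iff.1 h1).symm)
  have hmain : ∀ a : EReal, a ≠ ⊤ → (∀ ξ, a ≤ ((F ξ : ℝ) : EReal)) →
      a ≤ ((∫ v, φ v ∂μ : ℝ) : EReal) := by
    intro a hat hle
    induction a using EReal.rec with
    | bot => exact bot_le
    | coe t =>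
      rw [EReal.coe_le_coe_iff, ← hswap]
      have htle : ∀ ξ, t ≤ F ξ := fun ξ => EReal.coe_le_coe_iff.1 (hle ξ)
      calc t = ∫ _, t ∂μ := by rw [integral_const]; simp
        _ ≤ ∫ ξ, F ξ ∂μ := integral_mono (integrable_const t) hFint htle
    | top => exact absurd rfl hat
  exact hmain (f x₀) hne step1

end Main
end
end
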